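/- Let K ≥ 2, M ≥ 1, N ≥ 1 be integers with K·M > N, and let i* = ⌊N/M⌋. Then for all p ∈ (0,1), Σ_{i=i*+1}^{K} B_K(i)·(i·M - N) < p·(K·M - N), where B_K(i) = C(K,i) p^i (1-p)^{K-i}. -/

import Mathlib

noncomputable def binPMF (K : ℕ) (i : ℤ) (p : ℝ) : ℝ :=
  if 0 ≤ i then (K.choose i.toNat : ℝ) * p ^ i.toNat * (1 - p) ^ (K - i.toNat) else 0

lemma sum_choose_mul_pow (n : ℕ) (p : ℝ) :
    ∑ i ∈ Finset.range (n+1), (n.choose i : ℝ) * p ^ i * (1 - p) ^ (n - i) = 1 := by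
  have h2 : ∑ i ∈ Finset.range (n+1), (n.choose i : ℝ) * p ^ i * (1 - p) ^ (n - i)
      = (p + (1 - p)) ^ n := by
    rw [add_pow]
    exact Finset.sum_congr rfl (fun i _ => by ring)
  rw [h2]; norm_num

lemma sum_mul_choose_mul_pow (n : ℕ) (p : ℝ) :
    ∑ i ∈ Finset.range (n+1), (i : ℝ) * (n.choose i : ℝ) * p ^ i * (1 - p) ^ (n - i)
      = n * p := by
  cases n with
  | zero => simp
  | succ m =>
    rw [Finset.sum_range_succ']
    simp only [Nat.cast_zero, zero_mul, add_zero]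
    have key : ∀ i ∈ Finset.range (m+1),
        ((i+1 : ℕ) : ℝ) * ((m+1).choose (i+1) : ℝ) * p ^ (i+1) * (1 - p) ^ ((m+1) - (i+1))
          = ((m+1 : ℕ) : ℝ) * p * ((m.choose i : ℝ) * p ^ i * (1 - p) ^ (m - i)) := by
      intro i _
      have h1 : (m+1) * m.choose i = (m+1).choose (i+1) * (i+1) := Nat.add_one_mul_choose_eq m i
      have h2 : ((m+1 : ℕ) : ℝ) * (m.choose i : ℝ) = ((m+1).choose (i+1) : ℝ) * ((i+1 : ℕ) : ℝ) := by
        exact_mod_cast congrArg (fun x : ℕ => (x : ℝ)) h1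
      have h3 : (m+1) - (i+1) = m - i := Nat.succ_sub_succ m i
      rw [h3, pow_succ]
      linear_combination (-(p ^ i * p * (1 - p) ^ (m - i))) * h2
    calc ∑ i ∈ Finset.range (m+1),
          ((i+1 : ℕ) : ℝ) * ((m+1).choose (i+1) : ℝ) * p ^ (i+1) * (1 - p) ^ ((m+1) - (i+1))
        = ∑ i ∈ Finset.range (m+1),
          ((m+1 : ℕ) : ℝ) * p * ((m.choose i : ℝ) * p ^ i * (1 - p) ^ (m - i)) :=
          Finset.sum_congr rfl key
      _ = ((m+1 : ℕ) : ℝ) * p * ∑ i ∈ Finset.range (m+1),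
          ((m.choose i : ℝ) * p ^ i * (1 - p) ^ (m - i)) := by rw [Finset.mul_sum]
      _ = ((m+1 : ℕ) : ℝ) * p := by rw [sum_choose_mul_pow]; ring

theorem reception_gain_lt_chord (K M N : ℕ) (hK : 2 ≤ K) (hM : 1 ≤ M) (hN : 1 ≤ N)
    (h : N < K * M) (p : ℝ) (hp : p ∈ Set.Ioo (0:ℝ) 1) :
    ∑ i ∈ Finset.Icc (N / M + 1) K, binPMF K (i : ℤ) p * ((i : ℝ) * M - N)
      < p * ((K : ℝ) * M - N) := by
  obtain ⟨hp0, hp1⟩ := hp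
  have hq1 : 0 < 1 - p := by linarith
  have hKpos : (0:ℝ) < K := by exact_mod_cast Nat.lt_of_lt_of_le (by norm_num) hK
  have hKMN : (0:ℝ) < (K:ℝ) * M - N := by
    have : (N:ℝ) < (K:ℝ) * M := by exact_mod_cast h
    linarith
  set q := N / M with hq
  have hqK : q + 1 ≤ K := by
    have hMK : N < M * K := by rwa [Nat.mul_comm] at h
    exact Nat.succ_le_of_lt (Nat.div_lt_of_lt_mul hMK)
  set B : ℕ → ℝ := fun i => (K.choose i : ℝ) * p ^ i * (1 - p) ^ (K - i) with hB
  have hBpos : ∀ i, i ≤ K → 0 < B i := by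
    intro i hi
    have : 0 < K.choose i := Nat.choose_pos hi
    have hc : (0:ℝ) < (K.choose i : ℝ) := by exact_mod_cast this
    positivity
  have hBnn : ∀ i, 0 ≤ B i := by
    intro i
    rcases le_or_gt i K with hi | hi
    · exact (hBpos i hi).le
    · simp [hB, Nat.choose_eq_zero_of_lt hi]
  set F : ℕ → ℝ := fun i => if q + 1 ≤ i then B i * ((i:ℝ) * M - N) else 0 with hF
  set G : ℕ → ℝ := fun i => B i * ((i:ℝ) * ((K:ℝ) * M - N) / K) with hG
  have hLHS : ∑ i ∈ Finset.Icc (q + 1) K, binPMF K (i : ℤ) p * ((i : ℝ) * M - N)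
      = ∑ i ∈ Finset.range (K+1), F i := by
    have h1 : ∑ i ∈ Finset.Icc (q + 1) K, binPMF K (i : ℤ) p * ((i : ℝ) * M - N)
        = ∑ i ∈ Finset.Icc (q + 1) K, F i := by
      refine Finset.sum_congr rfl (fun i hi => ?_)
      rw [Finset.mem_Icc] at hi
      simp [hF, hi.1, binPMF, hB]
      exact fun h' => absurd h' (by omega)
    rw [h1]
    refine Finset.sum_subset ?_ ?_
    · intro i hi
      rw [Finset.mem_Icc] at hi
      exact Finset.mem_range.mpr (by omega)
    · intro i hi hni
      rw [Finset.mem_range] at hi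
      rw [Finset.mem_Icc] at hni
      have : ¬ (q + 1 ≤ i) := by omega
      simp [hF, this]
      exact fun h' => absurd h' (by omega)
  have hRHS : ∑ i ∈ Finset.range (K+1), G i = p * ((K:ℝ) * M - N) := by
    have h1 : ∑ i ∈ Finset.range (K+1), G i
        = (((K:ℝ) * M - N) / K) * ∑ i ∈ Finset.range (K+1),
            (i : ℝ) * (K.choose i : ℝ) * p ^ i * (1 - p) ^ (K - i) := by
      rw [Finset.mul_sum]
      exact Finset.sum_congr rfl (fun i _ => by simp [hG, hB]; ring)
    rw [h1, sum_mul_choose_mul_pow]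
    field_simp
  rw [hLHS, ← hRHS]
  refine Finset.sum_lt_sum ?_ ⟨1, Finset.mem_range.mpr (by omega), ?_⟩
  · intro i hi
    rw [Finset.mem_range] at hi
    by_cases hiq : q + 1 ≤ i
    · simp only [hF, hG, if_pos hiq]
      refine mul_le_mul_of_nonneg_left ?_ (hBnn i)
      rw [le_div_iff₀ hKpos]
      have hiK : (i:ℝ) ≤ K := by exact_mod_cast Nat.lt_succ_iff.mp hi
      have hNpos : (0:ℝ) < N := by exact_mod_cast hN
      nlinarith
    · simp only [hF, hG, if_neg hiq]
      have : (0:ℝ) ≤ (i:ℝ) * ((K:ℝ) * M - N) / K := by positivity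
      exact mul_nonneg (hBnn i) this
  · have hB1 : 0 < B 1 := hBpos 1 (by omega)
    by_cases hq0 : q = 0
    · have hNM0 : N / M = 0 := hq.symm.trans hq0
      have hNM : N < M := ((Nat.div_eq_zero_iff).mp hNM0).resolve_left (by omega)
      have hiq : q + 1 ≤ 1 := by omega
      simp only [hF, hG, if_pos hiq, Nat.cast_one, one_mul]
      refine mul_lt_mul_of_pos_left ?_ hB1
      rw [lt_div_iff₀ hKpos]
      have hNM' : (N:ℝ) < M := by exact_mod_cast hNM
      have hNpos : (1:ℝ) ≤ N := by exact_mod_cast hN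
      have hK' : (2:ℝ) ≤ K := by exact_mod_cast hK
      nlinarith
    · have hiq : ¬ (q + 1 ≤ 1) := fun hle => hq0 (Nat.lt_one_iff.mp hle)
      simp only [hF, hG, if_neg hiq, Nat.cast_one, one_mul]
      have : (0:ℝ) < ((K:ℝ) * M - N) / K := by positivity
      exact mul_pos hB1 this
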